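/- Fix $\rho \in \mathbb{C}$ with $\rho \neq 0$, and real numbers $N_1, N_2 \geq 0$ and $A \in \mathbb{C}$ with $|A| \leq N_1 N_2$. For $\alpha, \beta \in \mathbb{C}$ define $I_n = |\alpha|^2 |\rho|^{2n} N_1^2 + 2\,\mathrm{Re}(\bar\alpha \beta (\bar\rho/\rho)^n A) + |\beta|^2 |\rho|^{-2n} N_2^2$ for $n \in \mathbb{Z}$. If $\alpha \neq 0$, $\beta \neq 0$, and $I_n = I_{n+1} = 0$ for some $n$, then either $N_1 = N_2 = 0$, or ($|\rho| = 1$ and $\rho^2 = 1$). -/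

import Mathlib

open Complex

lemma eq_neg_ofReal_of_re_eq_neg (z : ℂ) (c : ℝ) (hre : z.re = -c)
    (habs : ‖z‖ ≤ c) : z = ((-c : ℝ) : ℂ) := by
  have h1 : ‖z‖ ^ 2 = z.re ^ 2 + z.im ^ 2 := by
    rw [Complex.sq_norm, Complex.normSq_apply]; ring
  have h2 : ‖z‖ ^ 2 ≤ c ^ 2 :=
    pow_le_pow_left₀ (norm_nonneg z) habs 2
  have h3 : z.re ^ 2 = c ^ 2 := by rw [hre]; ring
  have him2 : z.im ^ 2 ≤ 0 := by linarith
  have him : z.im = 0 :=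
    pow_eq_zero_iff (two_ne_zero) |>.mp (le_antisymm him2 (sq_nonneg _))
  apply Complex.ext <;> simp [hre, him]

/-- Algebraic core of the "two consecutive vanishing periods" lemma for
`u = α ψ₁ + β ψ₂` with Floquet multipliers `ρ` and `1/ρ`. -/
theorem consecutive_zero_periods (ρ : ℂ) (hρ : ρ ≠ 0)
    (N₁ N₂ : ℝ) (hN₁ : 0 ≤ N₁) (hN₂ : 0 ≤ N₂)
    (A : ℂ) (hA : ‖A‖ ≤ N₁ * N₂)
    (α β : ℂ) (hα : α ≠ 0) (hβ : β ≠ 0)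
    (I : ℤ → ℝ)
    (hI : ∀ n : ℤ, I n =
      (‖α‖) ^ 2 * (‖ρ‖) ^ (2 * n) * N₁ ^ 2 +
        2 * (starRingEnd ℂ α * β * ((starRingEnd ℂ ρ) / ρ) ^ n * A).re +
        (‖β‖) ^ 2 * (‖ρ‖) ^ (-(2 * n)) * N₂ ^ 2)
    (n : ℤ) (hn : I n = 0) (hn1 : I (n + 1) = 0) :
    (N₁ = 0 ∧ N₂ = 0) ∨ (‖ρ‖ = 1 ∧ ρ ^ 2 = 1) := by
  set r := ‖ρ‖ with hr_def
  have hr : 0 < r := norm_pos_iff.mpr hρ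
  have hr0 : r ≠ 0 := ne_of_gt hr
  set γ : ℂ := (starRingEnd ℂ ρ) / ρ with hγ_def
  have hγabs : ‖γ‖ = 1 := by
    rw [hγ_def, norm_div, Complex.norm_conj]
    field_simp
  have hγ0 : γ ≠ 0 := by
    intro h; rw [h] at hγabs; simp at hγabs
  have hzabs : ∀ m : ℤ,
      ‖starRingEnd ℂ α * β * γ ^ m * A‖
        = ‖α‖ * ‖β‖ * ‖A‖ := by
    intro m
    rw [norm_mul, norm_mul, norm_mul, norm_zpow, hγabs, Complex.norm_conj,
      one_zpow]
    ring
  have habspos : 0 < ‖α‖ * ‖β‖ :=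
    mul_pos (norm_pos_iff.mpr hα) (norm_pos_iff.mpr hβ)
  have hre : ∀ m : ℤ,
      -(‖α‖ * ‖β‖ * (N₁ * N₂)) ≤
        (starRingEnd ℂ α * β * γ ^ m * A).re := by
    intro m
    have h1 := Complex.abs_re_le_norm (starRingEnd ℂ α * β * γ ^ m * A)
    have h1' := neg_abs_le (starRingEnd ℂ α * β * γ ^ m * A).re
    have h2 : ‖starRingEnd ℂ α * β * γ ^ m * A‖
        ≤ ‖α‖ * ‖β‖ * (N₁ * N₂) := by
      rw [hzabs m]
      exact mul_le_mul_of_nonneg_left hA (le_of_lt habspos)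
    linarith
  have key : ∀ m : ℤ, I m = 0 →
      ‖α‖ * N₁ * r ^ m = ‖β‖ * N₂ * r ^ (-m) := by
    intro m hm
    have hpq : r ^ m * r ^ (-m) = 1 := by
      rw [← zpow_add₀ hr0]; simp
    have hp : (0:ℝ) < r ^ m := zpow_pos hr m
    have hq : (0:ℝ) < r ^ (-m) := zpow_pos hr (-m)
    have h2m : r ^ (2 * m) = (r ^ m) ^ 2 := by
      rw [← zpow_natCast (r ^ m) 2, ← zpow_mul]; ring_nf
    have h2m' : r ^ (-(2 * m)) = (r ^ (-m)) ^ 2 := by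
      rw [← zpow_natCast (r ^ (-m)) 2, ← zpow_mul]; ring_nf
    have hIm := hI m
    rw [hm, h2m, h2m'] at hIm
    have hrem := hre m
    have hcross : (‖α‖ * N₁ * r ^ m) * (‖β‖ * N₂ * r ^ (-m))
        = (‖α‖ * N₁) * (‖β‖ * N₂) := by
      calc (‖α‖ * N₁ * r ^ m) * (‖β‖ * N₂ * r ^ (-m))
          = (‖α‖ * N₁) * (‖β‖ * N₂) * (r ^ m * r ^ (-m)) := by ring
        _ = (‖α‖ * N₁) * (‖β‖ * N₂) := by rw [hpq, mul_one]
    have hsq : (‖α‖ * N₁ * r ^ m - ‖β‖ * N₂ * r ^ (-m)) ^ 2 ≤ 0 := by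
      nlinarith [hIm, hrem, hcross]
    have := sq_nonneg (‖α‖ * N₁ * r ^ m - ‖β‖ * N₂ * r ^ (-m))
    have h0 : (‖α‖ * N₁ * r ^ m - ‖β‖ * N₂ * r ^ (-m)) ^ 2 = 0 :=
      le_antisymm hsq this
    have := pow_eq_zero_iff (n := 2) (by norm_num) |>.mp h0
    linarith [sub_eq_zero.mp this]
  have k1 := key n hn
  have k2 := key (n + 1) hn1
  by_cases hcase : ‖α‖ * N₁ = 0
  · -- then N₁ = 0 and N₂ = 0
    have hN1 : N₁ = 0 := by
      rcases mul_eq_zero.mp hcase with h | h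
      · exact absurd h (norm_ne_zero_iff.mpr hα)
      · exact h
    have hb : ‖β‖ * N₂ * r ^ (-n) = 0 := by
      rw [← k1, hcase, zero_mul]
    have hN2 : N₂ = 0 := by
      have := mul_eq_zero.mp hb
      rcases this with h | h
      · rcases mul_eq_zero.mp h with h' | h'
        · exact absurd h' (norm_ne_zero_iff.mpr hβ)
        · exact h'
      · exact absurd h (ne_of_gt (zpow_pos hr (-n)))
    exact Or.inl ⟨hN1, hN2⟩
  · -- |α| N₁ > 0
    have haN : 0 < ‖α‖ * N₁ :=
      lt_of_le_of_ne (mul_nonneg (norm_nonneg α) hN₁) (Ne.symm hcase)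
    have hbN : 0 < ‖β‖ * N₂ := by
      have : ‖β‖ * N₂ * r ^ (-n) > 0 := by
        rw [← k1]; positivity
      have hq : (0:ℝ) < r ^ (-n) := zpow_pos hr (-n)
      nlinarith
    -- derive r = 1
    have hk2' : ‖α‖ * N₁ * (r ^ n * r) = ‖β‖ * N₂ * (r ^ (-n) * r⁻¹) := by
      have e1 : r ^ (n + 1) = r ^ n * r := by rw [zpow_add_one₀ hr0]
      have e2 : r ^ (-(n + 1)) = r ^ (-n) * r⁻¹ := by
        rw [neg_add, zpow_add₀ hr0, zpow_neg_one]
      rw [← e1, ← e2]; exact k2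
    have hr2 : r ^ 2 = 1 := by
      have hq : (0:ℝ) < r ^ (-n) := zpow_pos hr (-n)
      have h1 : ‖β‖ * N₂ * r ^ (-n) * r = ‖β‖ * N₂ * r ^ (-n) * r⁻¹ := by
        calc ‖β‖ * N₂ * r ^ (-n) * r
            = ‖α‖ * N₁ * r ^ n * r := by rw [k1]
          _ = ‖α‖ * N₁ * (r ^ n * r) := by ring
          _ = ‖β‖ * N₂ * (r ^ (-n) * r⁻¹) := hk2'
          _ = ‖β‖ * N₂ * r ^ (-n) * r⁻¹ := by ring
      have hc : 0 < ‖β‖ * N₂ * r ^ (-n) := by positivity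
      have hrr : r = r⁻¹ := by
        have h1' : ‖β‖ * N₂ * r ^ (-n) * r = ‖β‖ * N₂ * r ^ (-n) * r⁻¹ := h1
        exact mul_left_cancel₀ (ne_of_gt hc) h1'
      rw [sq]
      nth_rewrite 2 [hrr]
      exact mul_inv_cancel₀ hr0
    have hr1 : r = 1 := by
      nlinarith
    -- now r = 1, so a = b
    have hab : ‖α‖ * N₁ = ‖β‖ * N₂ := by
      have := k1
      rw [hr1, one_zpow, one_zpow, mul_one, mul_one] at this
      exact this
    set a := ‖α‖ * N₁ with ha_def
    -- z n = -a², z (n+1) = -a²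
    have hz : ∀ m : ℤ, I m = 0 →
        (starRingEnd ℂ α * β * γ ^ m * A) = ((-(a ^ 2) : ℝ) : ℂ) := by
      intro m hm
      have hIm := hI m
      rw [hm, hr1, one_zpow, one_zpow, mul_one, mul_one] at hIm
      have e1 : ‖α‖ ^ 2 * N₁ ^ 2 = a ^ 2 := by rw [ha_def]; ring
      have e2 : ‖β‖ ^ 2 * N₂ ^ 2 = a ^ 2 := by rw [hab]; ring
      apply eq_neg_ofReal_of_re_eq_neg
      · linarith [hIm, e1, e2]
      · rw [hzabs m]
        calc ‖α‖ * ‖β‖ * ‖A‖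
            ≤ ‖α‖ * ‖β‖ * (N₁ * N₂) :=
              mul_le_mul_of_nonneg_left hA (le_of_lt habspos)
          _ = a * (‖β‖ * N₂) := by rw [ha_def]; ring
          _ = a ^ 2 := by rw [← hab]; ring
    have hz1 := hz n hn
    have hz2 := hz (n + 1) hn1
    have hstep : starRingEnd ℂ α * β * γ ^ (n + 1) * A
        = (starRingEnd ℂ α * β * γ ^ n * A) * γ := by
      rw [zpow_add_one₀ hγ0]; ring
    rw [hz1, hz2] at hstep
    have ha2 : ((-(a ^ 2) : ℝ) : ℂ) ≠ 0 := by
      simp only [ne_eq, Complex.ofReal_eq_zero, neg_eq_zero]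
      positivity
    have hγ1 : γ = 1 := by
      have h1 : ((-(a ^ 2) : ℝ) : ℂ) * 1 = ((-(a ^ 2) : ℝ) : ℂ) * γ := by
        rw [mul_one]; exact hstep
      exact (mul_left_cancel₀ ha2 h1).symm
    have hconj : starRingEnd ℂ ρ = ρ := by
      have := hγ1
      rw [hγ_def, div_eq_one_iff_eq hρ] at this
      exact this
    refine Or.inr ⟨hr1, ?_⟩
    have : ρ ^ 2 = ρ * starRingEnd ℂ ρ := by rw [hconj, sq]
    rw [this, Complex.mul_conj, ← Complex.sq_norm]
    rw [← hr_def, hr1]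
    norm_num
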